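/- If M is a II_∞ factor, then the linear span of commutators [A,B] = AB − BA with A, B ∈ M is all of M; in fact, every T ∈ M is a sum of two commutators: there exist S ∈ M and isometries V, W ∈ M with T = [WS, W*] + [TV*, V]. -/

import Mathlib

noncomputable section

namespace Stmt4Aux

open scoped ComplexConjugate

local notation "⟪" x ", " y "⟫" => @inner ℂ _ _ x y

variable {H : Type*} [NormedAddCommGroup H] [InnerProductSpace ℂ H] [CompleteSpace H]

lemma pythag {f : ℕ → H} (hf : ∀ j k, j ≠ k → ⟪f j, f k⟫ = 0) (s : Finset ℕ) :
    ‖∑ i ∈ s, f i‖ ^ 2 = ∑ i ∈ s, ‖f i‖ ^ 2 := by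
  have key : ⟪∑ i ∈ s, f i, ∑ i ∈ s, f i⟫ = ∑ i ∈ s, ⟪f i, f i⟫ := by
    rw [inner_sum]
    refine Finset.sum_congr rfl fun j hj => ?_
    rw [sum_inner, Finset.sum_eq_single_of_mem j hj (fun i _ hij => hf i j hij)]
  have key2 : RCLike.re ⟪∑ i ∈ s, f i, ∑ i ∈ s, f i⟫
      = RCLike.re (∑ i ∈ s, ⟪f i, f i⟫) := congrArg _ key
  rw [inner_self_eq_norm_sq, map_sum] at key2
  simp only [inner_self_eq_norm_sq] at key2
  exact key2

lemma orthFam {f : ℕ → H} (hf : ∀ j k, j ≠ k → ⟪f j, f k⟫ = 0) :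
    OrthogonalFamily ℂ (fun i => ↥(ℂ ∙ f i)) (fun i => (ℂ ∙ f i).subtypeₗᵢ) := by
  intro i j hij v w
  obtain ⟨a, ha⟩ := Submodule.mem_span_singleton.mp v.2
  obtain ⟨b, hb⟩ := Submodule.mem_span_singleton.mp w.2
  show ⟪(v : H), (w : H)⟫ = 0
  rw [← ha, ← hb, inner_smul_left, inner_smul_right, hf i j hij]
  ring

lemma summable_of_orth {f : ℕ → H} (hf : ∀ j k, j ≠ k → ⟪f j, f k⟫ = 0)
    (h2 : Summable fun i => ‖f i‖ ^ 2) : Summable f := by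
  have h := ((orthFam hf).summable_iff_norm_sq_summable
    (fun i => ⟨f i, Submodule.mem_span_singleton_self _⟩)).2 (by simpa using h2)
  simpa using h

lemma hasSum_norm_sq_of_orth {f : ℕ → H} (hf : ∀ j k, j ≠ k → ⟪f j, f k⟫ = 0) {a : H}
    (h : HasSum f a) : HasSum (fun i => ‖f i‖ ^ 2) (‖a‖ ^ 2) := by
  have hc : Continuous fun x : H => ‖x‖ ^ 2 := (continuous_pow 2).comp continuous_norm
  have ht := (hc.tendsto a).comp h
  exact ht.congr fun s => pythag hf s

lemma exists_sumOp (A : ℕ → H →L[ℂ] H) (C : ℝ) (hC : 0 ≤ C)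
    (horth : ∀ (x y : H) (j k : ℕ), j ≠ k → ⟪A j x, A k y⟫ = 0)
    (hbnd : ∀ (x : H) (n : ℕ), ∑ j ∈ Finset.range n, ‖A j x‖ ^ 2 ≤ C ^ 2 * ‖x‖ ^ 2) :
    ∃ Op : H →L[ℂ] H, ∀ x, HasSum (fun j => A j x) (Op x) := by
  have hsq : ∀ x : H, Summable fun j => ‖A j x‖ ^ 2 := fun x =>
    summable_of_sum_range_le (fun j => sq_nonneg _) (hbnd x)
  have hsummable : ∀ x : H, Summable fun j => A j x := fun x =>
    summable_of_orth (fun j k h => horth x x j k h) (hsq x)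
  have hnorm : ∀ x : H, ‖∑' j, A j x‖ ≤ C * ‖x‖ := by
    intro x
    have h1 : HasSum (fun j => ‖A j x‖ ^ 2) (‖∑' j, A j x‖ ^ 2) :=
      hasSum_norm_sq_of_orth (fun j k h => horth x x j k h) (hsummable x).hasSum
    have h2 : ‖∑' j, A j x‖ ^ 2 ≤ (C * ‖x‖) ^ 2 := by
      rw [← h1.tsum_eq]
      calc ∑' j, ‖A j x‖ ^ 2 ≤ C ^ 2 * ‖x‖ ^ 2 :=
            Real.tsum_le_of_sum_range_le (fun j => sq_nonneg _) (hbnd x)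
        _ = (C * ‖x‖) ^ 2 := by ring
    have h3 := Real.sqrt_le_sqrt h2
    rwa [Real.sqrt_sq (norm_nonneg _), Real.sqrt_sq (by positivity)] at h3
  refine ⟨LinearMap.mkContinuous
    { toFun := fun x => ∑' j, A j x
      map_add' := fun x y => by
        show ∑' j, A j (x + y) = (∑' j, A j x) + ∑' j, A j y
        rw [tsum_congr (fun j => map_add (A j) x y)]
        exact Summable.tsum_add (hsummable x) (hsummable y)
      map_smul' := fun c x => by
        show ∑' j, A j (c • x) = c • ∑' j, A j x
        rw [tsum_congr (fun j => map_smul (A j) c x)]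
        exact ((hsummable x).hasSum.const_smul c).tsum_eq } C hnorm, fun x => ?_⟩
  simpa using (hsummable x).hasSum

end Stmt4Aux

/-- If `M` is a II_∞ factor (encoded by: `M` is a von Neumann algebra which is a factor,
has no minimal projections, and possesses a sequence of mutually orthogonal projections,
each equivalent to `1`, summing to `1`), then every `T ∈ M` lies in the linear span of
commutators, and in fact `T = [WS, W*] + [TV*, V]` for suitable `S ∈ M` and
isometries `V, W ∈ M`. -/
theorem stmt_4 {H : Type*} [NormedAddCommGroup H] [InnerProductSpace ℂ H]
    [CompleteSpace H] (M : VonNeumannAlgebra H)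
    (hfactor : ∀ x ∈ M, (∀ y ∈ M, x * y = y * x) → ∃ c : ℂ, x = c • (1 : H →L[ℂ] H))
    (hdiffuse : ∀ E : H →L[ℂ] H, E ∈ M → IsSelfAdjoint E → E * E = E → E ≠ 0 →
      ∃ E' : H →L[ℂ] H, E' ∈ M ∧ IsSelfAdjoint E' ∧ E' * E' = E' ∧
        E' ≠ 0 ∧ E' ≠ E ∧ E * E' = E')
    (hQ : ∃ Q : ℕ → H →L[ℂ] H,
      (∀ j, Q j ∈ M ∧ IsSelfAdjoint (Q j) ∧ Q j * Q j = Q j) ∧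
      (∀ j k, j ≠ k → Q j * Q k = 0) ∧
      (∀ x : H, HasSum (fun j => Q j x) x) ∧
      (∀ j, ∃ U ∈ M, star U * U = 1 ∧ U * star U = Q j)) :
    (∀ T ∈ M, (T : H →L[ℂ] H) ∈
      Submodule.span ℂ {x : H →L[ℂ] H | ∃ A ∈ M, ∃ B ∈ M, x = A * B - B * A}) ∧
    ∀ T ∈ M, ∃ S V W : H →L[ℂ] H, S ∈ M ∧ V ∈ M ∧ W ∈ M ∧
      star V * V = 1 ∧ star W * W = 1 ∧
      T = ((W * S) * star W - star W * (W * S)) +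
          ((T * star V) * V - V * (T * star V)) := by
  classical
  obtain ⟨Q, hQ1, hQ2, hQ3, hQ4⟩ := hQ
  choose U hUmem hUiso hUQ using hQ4
  -- basic facts about the U j
  have appIso : ∀ (j : ℕ) (x : H), star (U j) ((U j) x) = x := by
    intro j x
    have := congrArg (fun B : H →L[ℂ] H => B x) (hUiso j)
    simpa [ContinuousLinearMap.mul_apply] using this
  have UUorth : ∀ j k, j ≠ k → star (U j) * U k = 0 := by
    intro j k hjk
    have eQ1 : star (U j) * Q j = star (U j) := by
      rw [← hUQ j, ← mul_assoc, hUiso j, one_mul]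
    have eQ2 : Q k * U k = U k := by
      rw [← hUQ k, mul_assoc, hUiso k, mul_one]
    calc star (U j) * U k = (star (U j) * Q j) * (Q k * U k) := by rw [eQ1, eQ2]
      _ = star (U j) * (Q j * Q k) * U k := by simp only [mul_assoc]
      _ = 0 := by rw [hQ2 j k hjk, mul_zero, zero_mul]
  have appOrth : ∀ j k, j ≠ k → ∀ x : H, star (U j) ((U k) x) = 0 := by
    intro j k hjk x
    have := congrArg (fun B : H →L[ℂ] H => B x) (UUorth j k hjk)
    simpa [ContinuousLinearMap.mul_apply] using this
  have inner_U : ∀ j k, j ≠ k → ∀ a b : H,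
      (inner ℂ ((U j) a) ((U k) b) : ℂ) = 0 := by
    intro j k hjk a b
    rw [← ContinuousLinearMap.adjoint_inner_right, ← ContinuousLinearMap.star_eq_adjoint,
      appOrth j k hjk, inner_zero_right]
  have norm_U : ∀ (j : ℕ) (x : H), ‖(U j) x‖ = ‖x‖ := by
    intro j x
    have h : (inner ℂ ((U j) x) ((U j) x) : ℂ) = inner ℂ x x := by
      rw [← ContinuousLinearMap.adjoint_inner_right, ← ContinuousLinearMap.star_eq_adjoint,
        appIso j x]
    have h2 : ‖(U j) x‖ ^ 2 = ‖x‖ ^ 2 := by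
      have := congrArg RCLike.re h
      rwa [inner_self_eq_norm_sq, inner_self_eq_norm_sq] at this
    have := congrArg Real.sqrt h2
    rwa [Real.sqrt_sq (norm_nonneg _), Real.sqrt_sq (norm_nonneg _)] at this
  have hQsum : ∀ x : H, HasSum (fun j => (U j * star (U j)) x) x := by
    intro x
    have := hQ3 x
    simp only [← hUQ] at this
    exact this
  have hnormsq : ∀ x : H, HasSum (fun j => ‖star (U j) x‖ ^ 2) (‖x‖ ^ 2) := by
    intro x
    have h := Stmt4Aux.hasSum_norm_sq_of_orth (f := fun j => (U j * star (U j)) x)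
      (fun j k hjk => by
        simpa [ContinuousLinearMap.mul_apply] using inner_U j k hjk _ _) (hQsum x)
    simpa [ContinuousLinearMap.mul_apply, norm_U] using h
  have partial_le : ∀ (x : H) (s : Finset ℕ) (c : ℕ → ℕ), Function.Injective c →
      ∑ j ∈ s, ‖star (U (c j)) x‖ ^ 2 ≤ ‖x‖ ^ 2 := by
    intro x s c hc
    have h1 : ∑ j ∈ s, ‖star (U (c j)) x‖ ^ 2 = ∑ i ∈ s.image c, ‖star (U i) x‖ ^ 2 :=
      (Finset.sum_image (f := fun i => ‖star (U i) x‖ ^ 2) (g := c)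
        (fun a _ b _ h => hc h)).symm
    rw [h1]
    exact sum_le_hasSum _ (fun i _ => sq_nonneg _) (hnormsq x)
  -- the shift operator W and its adjoint candidate W'
  obtain ⟨W, hW⟩ := Stmt4Aux.exists_sumOp (fun j => U (j + 1) * star (U j)) 1 zero_le_one
    (fun x y j k hjk => by
      simpa [ContinuousLinearMap.mul_apply] using
        inner_U (j + 1) (k + 1) (by omega) (star (U j) x) (star (U k) y))
    (fun x n => by
      have : ∀ j : ℕ, ‖(U (j + 1) * star (U j)) x‖ ^ 2 = ‖star (U j) x‖ ^ 2 := by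
        intro j; rw [ContinuousLinearMap.mul_apply, norm_U]
      rw [Finset.sum_congr rfl fun j _ => this j]
      simpa using partial_le x (Finset.range n) id Function.injective_id)
  obtain ⟨W', hW'⟩ := Stmt4Aux.exists_sumOp (fun j => U j * star (U (j + 1))) 1 zero_le_one
    (fun x y j k hjk => by
      simpa [ContinuousLinearMap.mul_apply] using
        inner_U j k hjk (star (U (j + 1)) x) (star (U (k + 1)) y))
    (fun x n => by
      have : ∀ j : ℕ, ‖(U j * star (U (j + 1))) x‖ ^ 2 = ‖star (U (j + 1)) x‖ ^ 2 := by
        intro j; rw [ContinuousLinearMap.mul_apply, norm_U]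
      rw [Finset.sum_congr rfl fun j _ => this j]
      simpa using partial_le x (Finset.range n) (· + 1) (add_left_injective 1))
  -- star W = W'
  have hstarW : star W = W' := by
    have key : W' = ContinuousLinearMap.adjoint W := by
      rw [ContinuousLinearMap.eq_adjoint_iff]
      intro x y
      have h1 := (hW' x).mapL (innerSL ℂ y)
      have h3 := h1.star
      simp only [innerSL_apply_apply, inner_conj_symm, RCLike.star_def] at h3
      have h4 := (hW y).mapL (innerSL ℂ x)
      simp only [innerSL_apply_apply] at h4
      have hterm : ∀ j : ℕ, (inner ℂ ((U j * star (U (j + 1))) x) y : ℂ)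
          = inner ℂ x ((U (j + 1) * star (U j)) y) := by
        intro j
        simp only [ContinuousLinearMap.mul_apply]
        rw [← ContinuousLinearMap.adjoint_inner_right (U j),
          ← ContinuousLinearMap.adjoint_inner_left (U (j + 1))]
        simp only [← ContinuousLinearMap.star_eq_adjoint]
      rw [funext hterm] at h3
      exact h3.unique h4
    rw [ContinuousLinearMap.star_eq_adjoint, ← key]
  -- star W * W = 1
  have hWW : star W * W = 1 := by
    rw [hstarW]
    ext x
    have key : ∀ j : ℕ, star (U (j + 1)) (W x) = star (U j) x := by
      intro j
      have h := (hW x).mapL (star (U (j + 1)))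
      have hterm : ∀ i : ℕ, star (U (j + 1)) ((U (i + 1) * star (U i)) x)
          = if i = j then star (U j) x else 0 := by
        intro i
        by_cases hij : i = j
        · subst hij
          simp [ContinuousLinearMap.mul_apply, appIso]
        · simp [ContinuousLinearMap.mul_apply, hij,
            appOrth (j + 1) (i + 1) (by omega) (star (U i) x)]
      rw [funext hterm] at h
      exact ((hasSum_ite_eq j (star (U j) x)).unique h).symm
    have h2 := hW' (W x)
    have hterm2 : ∀ j : ℕ, (U j * star (U (j + 1))) (W x) = (U j * star (U j)) x := by
      intro j
      simp only [ContinuousLinearMap.mul_apply, key j]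
    rw [funext hterm2] at h2
    have := h2.unique (hQsum x)
    simpa [ContinuousLinearMap.mul_apply] using this
  -- main construction for arbitrary T ∈ M
  have mem_of_hasSum : ∀ (A : ℕ → H →L[ℂ] H) (Op : H →L[ℂ] H),
      (∀ j, A j ∈ M) → (∀ x, HasSum (fun j => A j x) (Op x)) → Op ∈ M := by
    intro A Op hA hOp
    rw [← SetLike.mem_coe, ← M.centralizer_centralizer]
    rw [Set.mem_centralizer_iff]
    intro z hz
    rw [Set.mem_centralizer_iff] at hz
    ext x
    have h1 := (hOp x).mapL z
    have hterm : ∀ j, z (A j x) = A j (z x) := by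
      intro j
      have := congrArg (fun B : H →L[ℂ] H => B x) (hz (A j) (hA j))
      have h' : A j (z x) = z (A j x) := by
        simpa [ContinuousLinearMap.mul_apply] using this
      exact h'.symm
    rw [funext hterm] at h1
    have := h1.unique (hOp (z x))
    simpa [ContinuousLinearMap.mul_apply] using this
  have hWmem : W ∈ M := mem_of_hasSum _ W
    (fun j => mul_mem (hUmem (j + 1)) (star_mem (hUmem j))) hW
  have main : ∀ T ∈ M, ∃ S V W : H →L[ℂ] H, S ∈ M ∧ V ∈ M ∧ W ∈ M ∧
      star V * V = 1 ∧ star W * W = 1 ∧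
      T = ((W * S) * star W - star W * (W * S)) +
          ((T * star V) * V - V * (T * star V)) := by
    intro T hT
    obtain ⟨S₀, hS₀⟩ := Stmt4Aux.exists_sumOp (fun k => U k * (T * star (U k))) ‖T‖
      (norm_nonneg T)
      (fun x y j k hjk => by
        simpa [ContinuousLinearMap.mul_apply] using
          inner_U j k hjk (T (star (U j) x)) (T (star (U k) y)))
      (fun x n => by
        have hle : ∀ j : ℕ, ‖(U j * (T * star (U j))) x‖ ^ 2
            ≤ ‖T‖ ^ 2 * ‖star (U j) x‖ ^ 2 := by
          intro j
          rw [ContinuousLinearMap.mul_apply, ContinuousLinearMap.mul_apply, norm_U]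
          calc ‖T (star (U j) x)‖ ^ 2 ≤ (‖T‖ * ‖star (U j) x‖) ^ 2 := by
                have := T.le_opNorm (star (U j) x)
                exact pow_le_pow_left₀ (norm_nonneg _) this 2
            _ = ‖T‖ ^ 2 * ‖star (U j) x‖ ^ 2 := by ring
        calc ∑ j ∈ Finset.range n, ‖(U j * (T * star (U j))) x‖ ^ 2
            ≤ ∑ j ∈ Finset.range n, ‖T‖ ^ 2 * ‖star (U j) x‖ ^ 2 :=
              Finset.sum_le_sum fun j _ => hle j
          _ = ‖T‖ ^ 2 * ∑ j ∈ Finset.range n, ‖star (U j) x‖ ^ 2 := by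
              rw [Finset.mul_sum]
          _ ≤ ‖T‖ ^ 2 * ‖x‖ ^ 2 := by
              refine mul_le_mul_of_nonneg_left ?_ (sq_nonneg _)
              simpa using partial_le x (Finset.range n) id Function.injective_id)
    have hS₀mem : S₀ ∈ M := mem_of_hasSum _ S₀
      (fun k => mul_mem (hUmem k) (mul_mem hT (star_mem (hUmem k)))) hS₀
    -- the shift identity
    have hWU : ∀ (k : ℕ) (z : H), W ((U k) z) = U (k + 1) z := by
      intro k z
      have h := hW ((U k) z)
      have hterm : ∀ j : ℕ, (U (j + 1) * star (U j)) ((U k) z)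
          = if j = k then U (k + 1) z else 0 := by
        intro j
        by_cases hjk : j = k
        · subst hjk
          simp [ContinuousLinearMap.mul_apply, appIso]
        · simp [ContinuousLinearMap.mul_apply, appOrth j k hjk z, hjk]
      rw [funext hterm] at h
      exact ((hasSum_ite_eq k (U (k + 1) z)).unique h).symm
    have hstep1 : ∀ (k : ℕ) (x : H), star (U k) (W' x) = star (U (k + 1)) x := by
      intro k x
      have h := (hW' x).mapL (star (U k))
      have hterm : ∀ j : ℕ, star (U k) ((U j * star (U (j + 1))) x)
          = if j = k then star (U (k + 1)) x else 0 := by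
        intro j
        by_cases hjk : j = k
        · subst hjk
          simp [ContinuousLinearMap.mul_apply, appIso]
        · simp [ContinuousLinearMap.mul_apply, appOrth k j (fun h' => hjk h'.symm) _, hjk]
      rw [funext hterm] at h
      exact ((hasSum_ite_eq k (star (U (k + 1)) x)).unique h).symm
    have hShift : (W * S₀) * star W = S₀ - U 0 * (T * star (U 0)) := by
      rw [hstarW]
      ext x
      have h2 := hS₀ (W' x)
      have hterm2 : ∀ k : ℕ, (U k * (T * star (U k))) (W' x)
          = (U k) (T (star (U (k + 1)) x)) := by
        intro k
        simp only [ContinuousLinearMap.mul_apply, hstep1 k x]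
      rw [funext hterm2] at h2
      have h3 := h2.mapL W
      have hterm3 : ∀ k : ℕ, W ((U k) (T (star (U (k + 1)) x)))
          = (fun k => (U k * (T * star (U k))) x) (k + 1) := by
        intro k
        simp only [ContinuousLinearMap.mul_apply]
        exact hWU k _
      rw [funext hterm3] at h3
      have h0 : HasSum (fun k => (U k * (T * star (U k))) x)
          ((S₀ x - (U 0 * (T * star (U 0))) x)
            + ∑ i ∈ Finset.range 1, (U i * (T * star (U i))) x) := by
        simpa using hS₀ x
      have h4 := (hasSum_nat_add_iff 1).mpr h0
      have := h3.unique h4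
      simpa [ContinuousLinearMap.mul_apply, ContinuousLinearMap.sub_apply] using this
    refine ⟨-S₀, U 0, W, neg_mem hS₀mem, hUmem 0, hWmem, hUiso 0, hWW, ?_⟩
    have e1 : (W * -S₀) * star W = -((W * S₀) * star W) := by
      rw [mul_neg, neg_mul]
    have e2 : star W * (W * -S₀) = -S₀ := by
      rw [← mul_assoc, hWW, one_mul]
    have e3 : (T * star (U 0)) * U 0 = T := by
      rw [mul_assoc, hUiso 0, mul_one]
    rw [e1, e2, e3, hShift]
    abel
  exact ⟨fun T hT => by
    obtain ⟨S, V, W'', hS, hV, hW'', hVV, hWW'', heq⟩ := main T hT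
    rw [heq]
    exact Submodule.add_mem _
      (Submodule.subset_span ⟨W'' * S, mul_mem hW'' hS, star W'', star_mem hW'', rfl⟩)
      (Submodule.subset_span ⟨T * star V, mul_mem hT (star_mem hV), V, hV, rfl⟩), main⟩
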